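/- Let G(x,y) ∈ ℂ[[x,y]] satisfy G = ax + by + (higher order terms) with a·b ≠ 0, and let m > 1. Then there exists a unique polynomial q(x) ∈ ℂ[x] of degree < m with q(0) = 0 such that the ideal (G, (x,y)^m) equals (y + q(x), x^m) in ℂ[[x,y]]. -/

import Mathlib

open MvPowerSeries

namespace UniqueQ

noncomputable section

abbrev R2 : Type := MvPowerSeries (Fin 2) ℂ

def e0 : Fin 2 →₀ ℕ := Finsupp.single 0 1
def e1 : Fin 2 →₀ ℕ := Finsupp.single 1 1

/-- shift in y -/
def Dy : R2 →ₗ[ℂ] R2 where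
  toFun f := fun d => coeff (d + e1) f
  map_add' f g := rfl
  map_smul' c f := rfl

/-- y-free part -/
def Ry : R2 →ₗ[ℂ] R2 where
  toFun f := fun d => if d 1 = 0 then coeff d f else 0
  map_add' f g := by
    funext d
    show (if d 1 = 0 then (f + g) d else 0)
        = (if d 1 = 0 then f d else 0) + (if d 1 = 0 then g d else 0)
    by_cases h : d 1 = 0
    · simp only [if_pos h]; rfl
    · simp [h]
  map_smul' c f := by
    funext d
    show (if d 1 = 0 then (c • f) d else 0) = c • (if d 1 = 0 then f d else 0)
    by_cases h : d 1 = 0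
    · simp only [if_pos h]; rfl
    · simp [h]

@[simp] lemma coeff_Dy (f : R2) (d : Fin 2 →₀ ℕ) : coeff d (Dy f) = coeff (d + e1) f := rfl

@[simp] lemma coeff_Ry (f : R2) (d : Fin 2 →₀ ℕ) :
    coeff d (Ry f) = if d 1 = 0 then coeff d f else 0 := rfl

/-- The ideal of power series whose coefficients vanish in total degree `< n`. -/
def Cdeg (n : ℕ) : Ideal R2 where
  carrier := {f | ∀ d : Fin 2 →₀ ℕ, d 0 + d 1 < n → coeff d f = 0}
  zero_mem' := by intro d _; simp
  add_mem' := by intro f g hf hg d hd; simp [map_add, hf d hd, hg d hd]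
  smul_mem' := by
    classical
    intro c f hf d hd
    rw [smul_eq_mul, coeff_mul]
    refine Finset.sum_eq_zero fun p hp => ?_
    rw [Finset.HasAntidiagonal.mem_antidiagonal] at hp
    have : p.2 0 + p.2 1 < n := by
      have h0 : p.2 0 ≤ d 0 := by
        have := congrFun (congrArg (DFunLike.coe) hp) 0
        simp [Finsupp.add_apply] at this; omega
      have h1 : p.2 1 ≤ d 1 := by
        have := congrFun (congrArg (DFunLike.coe) hp) 1
        simp [Finsupp.add_apply] at this; omega
      omega
    rw [hf p.2 this, mul_zero]

lemma mem_Cdeg {n : ℕ} {f : R2} :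
    f ∈ Cdeg n ↔ ∀ d : Fin 2 →₀ ℕ, d 0 + d 1 < n → coeff d f = 0 := Iff.rfl

lemma Cdeg_antitone {n n' : ℕ} (h : n ≤ n') : Cdeg n' ≤ Cdeg n :=
  fun _ hf d hd => hf d (lt_of_lt_of_le hd h)

lemma mul_mem_Cdeg {i j : ℕ} {f g : R2} (hf : f ∈ Cdeg i) (hg : g ∈ Cdeg j) :
    f * g ∈ Cdeg (i + j) := by
  classical
  intro d hd
  rw [coeff_mul]
  refine Finset.sum_eq_zero fun p hp => ?_
  rw [Finset.HasAntidiagonal.mem_antidiagonal] at hp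
  have h0 : p.1 0 + p.2 0 = d 0 := by
    have := congrFun (congrArg (DFunLike.coe) hp) 0
    simpa [Finsupp.add_apply] using this
  have h1 : p.1 1 + p.2 1 = d 1 := by
    have := congrFun (congrArg (DFunLike.coe) hp) 1
    simpa [Finsupp.add_apply] using this
  by_cases h : p.1 0 + p.1 1 < i
  · rw [hf p.1 h, zero_mul]
  · rw [hg p.2 (by omega), mul_zero]


@[simp] lemma e1_app0 : e1 0 = 0 := by simp [e1]
@[simp] lemma e1_app1 : e1 1 = 1 := by simp [e1]
@[simp] lemma e0_app0 : e0 0 = 1 := by simp [e0]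
@[simp] lemma e0_app1 : e0 1 = 0 := by simp [e0]

/-- series only involving the variable `x = X 0` -/
def xonly (f : R2) : Prop := ∀ d : Fin 2 →₀ ℕ, d 1 ≠ 0 → coeff d f = 0

lemma coord {p : (Fin 2 →₀ ℕ) × (Fin 2 →₀ ℕ)} {d : Fin 2 →₀ ℕ} (h : p.1 + p.2 = d)
    (i : Fin 2) : p.1 i + p.2 i = d i := by
  have := congrFun (congrArg (DFunLike.coe) h) i
  simpa [Finsupp.add_apply] using this

lemma e1_le {d : Fin 2 →₀ ℕ} (h : d 1 ≠ 0) : e1 ≤ d := by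
  rw [Finsupp.le_def, Fin.forall_fin_two]
  constructor <;> simp <;> omega

lemma Dy_mul_xonly {u : R2} (g : R2) (hu : xonly u) : Dy (u * g) = u * Dy g := by
  classical
  ext d
  rw [coeff_Dy, coeff_mul, coeff_mul]
  simp only [coeff_Dy]
  have hinj : ∀ p ∈ Finset.HasAntidiagonal.antidiagonal d, ∀ q ∈ Finset.HasAntidiagonal.antidiagonal d,
      (fun p : (Fin 2 →₀ ℕ) × (Fin 2 →₀ ℕ) => (p.1, p.2 + e1)) p
        = (fun p : (Fin 2 →₀ ℕ) × (Fin 2 →₀ ℕ) => (p.1, p.2 + e1)) q → p = q := by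
    intro p _ q _ h
    simp only [Prod.mk.injEq] at h
    exact Prod.ext h.1 (add_right_cancel h.2)
  refine Eq.trans ?_ (Finset.sum_image
    (f := fun p : (Fin 2 →₀ ℕ) × (Fin 2 →₀ ℕ) => coeff p.1 u * coeff p.2 g) hinj)
  refine (Finset.sum_subset ?_ ?_).symm
  · intro q hq
    simp only [Finset.mem_image] at hq
    obtain ⟨p, hp, rfl⟩ := hq
    rw [Finset.HasAntidiagonal.mem_antidiagonal] at hp ⊢
    rw [← add_assoc, hp]
  · intro q hq hq'
    rw [Finset.HasAntidiagonal.mem_antidiagonal] at hq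
    by_cases h1 : q.1 1 = 0
    · exfalso
      apply hq'
      have hle : e1 ≤ q.2 := by
        apply e1_le
        have := coord hq 1
        simp [Finsupp.add_apply] at this
        omega
      refine Finset.mem_image.mpr ?_
      have hmem : (q.1, q.2 - e1) ∈ Finset.HasAntidiagonal.antidiagonal d := by
        rw [Finset.HasAntidiagonal.mem_antidiagonal]
        have : q.1 + (q.2 - e1) + e1 = d + e1 := by
          rw [add_assoc, tsub_add_cancel_of_le hle, hq]
        exact add_right_cancel this
      have heq : ((q.1, q.2 - e1).1, (q.2 - e1) + e1) = q := by
        have : q.2 - e1 + e1 = q.2 := tsub_add_cancel_of_le hle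
        rw [this]
      exact ⟨(q.1, q.2 - e1), hmem, heq⟩
    · rw [hu q.1 h1, zero_mul]

lemma Ry_mul_xonly {u : R2} (g : R2) (hu : xonly u) : Ry (u * g) = u * Ry g := by
  classical
  ext d
  rw [coeff_Ry, coeff_mul, coeff_mul]
  simp only [coeff_Ry]
  by_cases hd : d 1 = 0
  · rw [if_pos hd]
    refine Finset.sum_congr rfl fun p hp => ?_
    rw [Finset.HasAntidiagonal.mem_antidiagonal] at hp
    have := coord hp 1
    rw [if_pos (by omega)]
  · rw [if_neg hd]
    refine (Finset.sum_eq_zero fun p hp => ?_).symm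
    rw [Finset.HasAntidiagonal.mem_antidiagonal] at hp
    have := coord hp 1
    by_cases h2 : p.2 1 = 0
    · rw [hu p.1 (by omega), zero_mul]
    · rw [if_neg h2, mul_zero]

lemma Dy_X1_mul (g : R2) : Dy (X 1 * g) = g := by
  classical
  ext d
  rw [coeff_Dy, X, coeff_monomial_mul]
  have hle : (Finsupp.single (1 : Fin 2) 1) ≤ d + e1 := by
    show e1 ≤ d + e1
    exact le_add_self
  rw [if_pos hle, one_mul,
    show d + e1 - Finsupp.single (1 : Fin 2) 1 = d from add_tsub_cancel_right d e1]

lemma Ry_X1_mul (g : R2) : Ry (X 1 * g) = 0 := by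
  classical
  ext d
  rw [coeff_Ry]
  by_cases hd : d 1 = 0
  · rw [if_pos hd, X, coeff_monomial_mul, if_neg, map_zero]
    intro hle
    have := (Finsupp.le_def.mp hle) 1
    simp [Finsupp.single_apply] at this
    omega
  · rw [if_neg hd, map_zero]

/-- shift in x -/
def Dx (f : R2) : R2 := fun d => coeff (d + e0) f

@[simp] lemma coeff_Dx (f : R2) (d : Fin 2 →₀ ℕ) : coeff d (Dx f) = coeff (d + e0) f := rfl

lemma e0_le {d : Fin 2 →₀ ℕ} (h : d 0 ≠ 0) : e0 ≤ d := by
  rw [Finsupp.le_def, Fin.forall_fin_two]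
  constructor <;> simp <;> omega

lemma eq_zero_of_apps {d : Fin 2 →₀ ℕ} (h0 : d 0 = 0) (h1 : d 1 = 0) : d = 0 := by
  ext i
  match i with
  | 0 => simpa using h0
  | 1 => simpa using h1

/-- The fundamental splitting of a 2-variable power series. -/
lemma split (f : R2) :
    f = MvPowerSeries.C (constantCoeff f)
        + X 0 * Dx (Ry f) + X 1 * Dy f := by
  classical
  ext d
  rw [map_add, map_add]
  rw [X, X, coeff_monomial_mul, coeff_monomial_mul, coeff_C]
  by_cases h1 : d 1 = 0
  · by_cases h0 : d 0 = 0
    · have hd : d = 0 := eq_zero_of_apps h0 h1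
      subst hd
      rw [if_pos rfl, if_neg, if_neg]
      · simp [coeff_zero_eq_constantCoeff]
      · intro hle; have := Finsupp.le_def.mp hle 1; simp [Finsupp.single_apply] at this
      · intro hle; have := Finsupp.le_def.mp hle 0; simp [Finsupp.single_apply] at this
    · have hle : (Finsupp.single (0 : Fin 2) 1) ≤ d := e0_le h0
      rw [if_neg (fun h => h0 (by rw [h]; rfl)), if_pos hle, if_neg, one_mul]
      · have hd : d - Finsupp.single (0 : Fin 2) 1 + e0 = d := by
          show d - e0 + e0 = d
          exact tsub_add_cancel_of_le hle
        rw [coeff_Dx, hd, coeff_Ry, if_pos h1, add_zero, zero_add]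
      · intro hle'; have := Finsupp.le_def.mp hle' 1; simp [Finsupp.single_apply] at this
        omega
  · have hle : (Finsupp.single (1 : Fin 2) 1) ≤ d := e1_le h1
    rw [if_neg (fun h => h1 (by rw [h]; rfl)), if_pos hle, one_mul]
    have hd : d - Finsupp.single (1 : Fin 2) 1 + e1 = d := by
      show d - e1 + e1 = d
      exact tsub_add_cancel_of_le hle
    rw [coeff_Dy, hd]
    by_cases h0 : (Finsupp.single (0 : Fin 2) 1) ≤ d
    · rw [if_pos h0, one_mul]
      have hd0 : d - Finsupp.single (0 : Fin 2) 1 + e0 = d := by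
        show d - e0 + e0 = d
        exact tsub_add_cancel_of_le h0
      rw [coeff_Dx, hd0, coeff_Ry, if_neg h1]
      ring
    · rw [if_neg h0]
      ring

lemma Dy_mem_Cdeg {j : ℕ} {f : R2} (hf : f ∈ Cdeg j) : Dy f ∈ Cdeg (j - 1) := by
  intro d hd
  rw [coeff_Dy]
  apply hf
  simp [Finsupp.add_apply]
  omega

lemma Dx_Ry_mem_Cdeg {j : ℕ} {f : R2} (hf : f ∈ Cdeg j) : Dx (Ry f) ∈ Cdeg (j - 1) := by
  intro d hd
  rw [coeff_Dx, coeff_Ry]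
  by_cases h1 : (d + e0) 1 = 0
  · rw [if_pos h1]
    apply hf
    simp [Finsupp.add_apply]
    omega
  · rw [if_neg h1]

lemma Cdeg_le_pow (n : ℕ) :
    Cdeg n ≤ (Ideal.span {(X 0 : R2), X 1}) ^ n := by
  induction n with
  | zero => simp
  | succ k ih =>
    intro f hf
    have h0 : constantCoeff f = 0 := hf 0 (by simp)
    rw [split f, h0, map_zero, zero_add]
    rw [pow_succ']
    apply Ideal.add_mem
    · have h1 : Dx (Ry f) ∈ Cdeg k := by simpa using Dx_Ry_mem_Cdeg (j := k + 1) hf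
      exact Ideal.mul_mem_mul (Ideal.subset_span (by simp)) (ih h1)
    · have h2 : Dy f ∈ Cdeg k := by simpa using Dy_mem_Cdeg (j := k + 1) hf
      exact Ideal.mul_mem_mul (Ideal.subset_span (by simp)) (ih h2)


lemma xonly_X0_pow (p : ℕ) : xonly ((X 0 : R2) ^ p) := by
  classical
  intro d hd
  rw [coeff_X_pow]
  rw [if_neg]
  intro h
  subst h
  simp [Finsupp.single_apply] at hd

lemma X0_pow_mem_Cdeg (p : ℕ) : (X 0 : R2) ^ p ∈ Cdeg p := by
  induction p with
  | zero => simp [mem_Cdeg]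
  | succ k ih =>
    have hX : (X 0 : R2) ∈ Cdeg 1 := by
      classical
      intro d hd
      rw [coeff_X, if_neg]
      intro h
      subst h
      simp [Finsupp.single_apply] at hd
    have := mul_mem_Cdeg ih hX
    rwa [pow_succ]

/-- `x^p · Cdeg j` as a `ℂ`-submodule. -/
def W (p j : ℕ) : Submodule ℂ R2 :=
  Submodule.map (LinearMap.mulLeft ℂ ((X 0 : R2) ^ p)) ((Cdeg j).restrictScalars ℂ)

lemma mem_W {p j : ℕ} {f : R2} : f ∈ W p j ↔ ∃ g ∈ Cdeg j, (X 0 : R2) ^ p * g = f := by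
  simp [W, Submodule.mem_map, LinearMap.mulLeft_apply, Submodule.restrictScalars_mem]

def V (i : ℕ) : Submodule ℂ R2 :=
  ⨆ (p : ℕ) (j : ℕ) (_ : i ≤ 2 * p + j), W p j

lemma mem_V_of {i p j : ℕ} {f : R2} (h : i ≤ 2 * p + j) (hf : f ∈ W p j) : f ∈ V i := by
  apply Submodule.mem_iSup_of_mem p
  apply Submodule.mem_iSup_of_mem j
  exact Submodule.mem_iSup_of_mem h hf

lemma V_antitone {i i' : ℕ} (h : i' ≤ i) : V i ≤ V i' := by
  refine iSup_le fun p => iSup_le fun j => iSup_le fun hij => ?_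
  intro f hf
  exact mem_V_of (le_trans h hij) hf

lemma W_le_Cdeg (p j : ℕ) : W p j ≤ (Cdeg (p + j)).restrictScalars ℂ := by
  intro f hf
  obtain ⟨g, hg, rfl⟩ := mem_W.mp hf
  exact mul_mem_Cdeg (X0_pow_mem_Cdeg p) hg

lemma V_le_Cdeg {i n : ℕ} (h : ∀ p j : ℕ, i ≤ 2 * p + j → n ≤ p + j) :
    V i ≤ (Cdeg n).restrictScalars ℂ := by
  refine iSup_le fun p => iSup_le fun j => iSup_le fun hij => ?_
  refine le_trans (W_le_Cdeg p j) ?_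
  intro f hf
  exact Cdeg_antitone (h p j hij) hf

lemma Cdeg_one_le_V_one : (Cdeg 1).restrictScalars ℂ ≤ V 1 := by
  intro f hf
  refine mem_V_of (p := 0) (j := 1) (by omega) ?_
  rw [mem_W]
  exact ⟨f, hf, by rw [pow_zero, one_mul]⟩

/-- The operator `f ↦ Dy (f * P)`. -/
def Tmap (P : R2) : R2 →ₗ[ℂ] R2 := Dy ∘ₗ LinearMap.mulRight ℂ P

lemma Tmap_apply (P f : R2) : Tmap P f = Dy (f * P) := rfl

lemma Tmap_V_le (c : ℂ) (h' : R2) (hh : h' ∈ Cdeg 2) (i : ℕ) :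
    Submodule.map (Tmap (c • X 0 + h')) (V i) ≤ V (i + 1) := by
  set P := c • X 0 + h' with hP
  rw [V, Submodule.map_iSup]
  refine iSup_le fun p => ?_
  rw [Submodule.map_iSup]
  refine iSup_le fun j => ?_
  rw [Submodule.map_iSup]
  refine iSup_le fun hij => ?_
  rw [Submodule.map_le_iff_le_comap]
  intro f hf
  obtain ⟨g, hg, rfl⟩ := mem_W.mp hf
  simp only [Submodule.mem_comap, Tmap_apply]
  have hx : xonly ((X 0 : R2) ^ p) := xonly_X0_pow p
  have hX1 : xonly (X 0 : R2) := by
    intro d hd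
    simpa using xonly_X0_pow 1 d hd
  have key : Dy ((X 0 : R2) ^ p * g * P)
      = c • ((X 0 : R2) ^ (p + 1) * Dy g) + (X 0 : R2) ^ p * Dy (g * h') := by
    rw [mul_assoc, Dy_mul_xonly _ hx]
    have hgP : g * P = c • ((X 0 : R2) * g) + g * h' := by
      rw [hP, mul_add, mul_smul_comm, mul_comm g (X 0)]
    rw [hgP, map_add, map_smul, Dy_mul_xonly g hX1]
    rw [mul_add, mul_smul_comm, ← mul_assoc, ← pow_succ]
  rw [key]
  apply Submodule.add_mem
  · apply Submodule.smul_mem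
    exact mem_V_of (p := p + 1) (j := j - 1) (by omega)
      (mem_W.mpr ⟨Dy g, Dy_mem_Cdeg hg, rfl⟩)
  · refine mem_V_of (p := p) (j := j + 1) (by omega) (mem_W.mpr ⟨Dy (g * h'), ?_, rfl⟩)
    have h2 : Dy (g * h') ∈ Cdeg (j + 2 - 1) := Dy_mem_Cdeg (mul_mem_Cdeg hg hh)
    simpa using h2


lemma single0_eq_iff {d : Fin 2 →₀ ℕ} (h1 : d 1 = 0) (i : ℕ) :
    d = Finsupp.single (0 : Fin 2) i ↔ d 0 = i := by
  constructor
  · intro h; rw [h]; simp [Finsupp.single_apply]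
  · intro h
    ext j
    match j with
    | 0 => simpa [Finsupp.single_apply] using h
    | 1 => simpa [Finsupp.single_apply] using h1

lemma coeff_aeval_X0 (q : Polynomial ℂ) (d : Fin 2 →₀ ℕ) :
    coeff d (Polynomial.aeval (X 0 : R2) q) = if d 1 = 0 then q.coeff (d 0) else 0 := by
  classical
  rw [Polynomial.aeval_eq_sum_range, map_sum]
  simp only [map_smul, smul_eq_mul, coeff_X_pow]
  by_cases h1 : d 1 = 0
  · rw [if_pos h1]
    by_cases hd : d 0 < q.natDegree + 1
    · rw [Finset.sum_eq_single (d 0)]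
      · rw [if_pos ((single0_eq_iff h1 (d 0)).mpr rfl), mul_one]
      · intro i _ hne
        rw [if_neg, mul_zero]
        rw [single0_eq_iff h1]
        omega
      · intro h
        exact absurd (Finset.mem_range.mpr hd) h
    · rw [Finset.sum_eq_zero, eq_comm, Polynomial.coeff_eq_zero_of_natDegree_lt (by omega)]
      intro i hi
      rw [Finset.mem_range] at hi
      rw [if_neg, mul_zero]
      rw [single0_eq_iff h1]
      omega
  · rw [if_neg h1]
    refine Finset.sum_eq_zero fun i _ => ?_
    rw [if_neg, mul_zero]
    intro h
    rw [h] at h1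
    simp [Finsupp.single_apply] at h1

lemma xonly_aeval (q : Polynomial ℂ) : xonly (Polynomial.aeval (X 0 : R2) q) := by
  intro d hd
  rw [coeff_aeval_X0, if_neg hd]

lemma deg_lt_one {d : Fin 2 →₀ ℕ} (h : d 0 + d 1 < 1) : d = 0 :=
  eq_zero_of_apps (by omega) (by omega)

lemma deg_lt_two {d : Fin 2 →₀ ℕ} (h : d 0 + d 1 < 2) :
    d = 0 ∨ d = e0 ∨ d = e1 := by
  by_cases h0 : d 0 = 0
  · by_cases h1 : d 1 = 0
    · exact Or.inl (eq_zero_of_apps h0 h1)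
    · refine Or.inr (Or.inr ?_)
      ext j
      match j with
      | 0 => simpa using h0
      | 1 => simp only [e1_app1]; omega
  · refine Or.inr (Or.inl ?_)
    ext j
    match j with
    | 0 => simp only [e0_app0]; omega
    | 1 => simp only [e0_app1]; omega

lemma splitY (f : R2) : f = Ry f + X 1 * Dy f := by
  classical
  ext d
  rw [map_add, coeff_Ry, X, coeff_monomial_mul]
  by_cases h1 : d 1 = 0
  · rw [if_pos h1, if_neg, add_zero]
    intro hle
    have := Finsupp.le_def.mp hle 1
    simp [Finsupp.single_apply] at this
    omega
  · have hle : (Finsupp.single (1 : Fin 2) 1) ≤ d := e1_le h1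
    rw [if_neg h1, if_pos hle, one_mul, zero_add, coeff_Dy]
    rw [show d - Finsupp.single (1 : Fin 2) 1 + e1 = d from tsub_add_cancel_of_le hle]

lemma build (c : ℂ) (h' : R2) (hh : h' ∈ Cdeg 2)
    (hP1 : Dy (c • X 0 + h') ∈ Cdeg 1) (k : ℕ) :
    ∃ s : R2, s ∈ Cdeg 1 ∧
      Dy (c • X 0 + h') + s + Tmap (c • X 0 + h') s ∈ V (k + 1) := by
  induction k with
  | zero =>
    refine ⟨0, Submodule.zero_mem _, ?_⟩
    rw [map_zero, add_zero, add_zero]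
    exact Cdeg_one_le_V_one hP1
  | succ n ih =>
    obtain ⟨s, hs1, hsV⟩ := ih
    set P := c • X 0 + h' with hPdef
    set E := Dy P + s + Tmap P s with hEdef
    refine ⟨s - E, ?_, ?_⟩
    · have hE1 : E ∈ Cdeg 1 :=
        V_le_Cdeg (n := 1) (fun p j h => by omega) hsV
      exact Ideal.sub_mem _ hs1 hE1
    · have heq : Dy P + (s - E) + Tmap P (s - E) = -(Tmap P E) := by
        rw [map_sub, hEdef]
        abel
      rw [heq]
      apply Submodule.neg_mem
      exact Tmap_V_le c h' hh (n + 1) (Submodule.mem_map_of_mem hsV)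

lemma exists_rel (G : R2) (b : ℂ) (h0 : constantCoeff G = 0)
    (hb : coeff e1 G = b) (hbne : b ≠ 0) (m : ℕ) (hm : 1 < m) :
    ∃ (u : R2) (q : Polynomial ℂ), IsUnit u ∧ q.degree < (m : WithBot ℕ) ∧ q.coeff 0 = 0 ∧
      X 1 + Polynomial.aeval (X 0) q - u * G ∈ Cdeg m := by
  classical
  set P : R2 := C b⁻¹ * G - X 1 with hPdef
  set c : ℂ := b⁻¹ * coeff e0 G with hcdef
  set h' : R2 := P - c • X 0 with hh'def
  have hP : P = c • X 0 + h' := by rw [hh'def]; abel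
  have hcX0 : ∀ d, coeff d ((c • X 0 : R2)) = if d = Finsupp.single (0 : Fin 2) 1 then c else 0 := by
    intro d
    rw [map_smul, smul_eq_mul, coeff_X]
    by_cases h : d = Finsupp.single (0 : Fin 2) 1 <;> simp [h]
  have hP0 : coeff 0 P = 0 := by
    rw [hPdef, map_sub, coeff_C_mul, coeff_zero_eq_constantCoeff_apply, h0, coeff_X, if_neg, mul_zero, sub_zero]
    intro h
    have := congrFun (congrArg (DFunLike.coe) h) 1
    simp [Finsupp.single_apply] at this
  have hPe0 : coeff e0 P = c := by
    rw [hPdef, map_sub, coeff_C_mul, coeff_X, if_neg, sub_zero, hcdef]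
    intro h
    have := congrFun (congrArg (DFunLike.coe) h) 1
    simp [Finsupp.single_apply] at this
  have hPe1 : coeff e1 P = 0 := by
    rw [hPdef, map_sub, coeff_C_mul, hb, coeff_X, if_pos (show e1 = Finsupp.single (1 : Fin 2) 1 from rfl), inv_mul_cancel₀ hbne, sub_self]
  have hh : h' ∈ Cdeg 2 := by
    intro d hd
    rw [hh'def, map_sub, hcX0]
    rcases deg_lt_two hd with rfl | rfl | rfl
    · rw [hP0, if_neg, sub_zero]
      intro h
      have := congrFun (congrArg (DFunLike.coe) h) 0
      simp [Finsupp.single_apply] at this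
    · rw [hPe0, if_pos (show e0 = Finsupp.single (0 : Fin 2) 1 from rfl), sub_self]
    · rw [hPe1, if_neg, sub_zero]
      intro h
      have := congrFun (congrArg (DFunLike.coe) h) 1
      simp [Finsupp.single_apply, e1] at this
  have hP1 : Dy P ∈ Cdeg 1 := by
    intro d hd
    rw [deg_lt_one hd, coeff_Dy, zero_add, hPe1]
  obtain ⟨s, hs1, hsV⟩ := build c h' hh (by rwa [← hP]) (2 * m)
  rw [← hP] at hsV
  have hE : Dy P + s + Tmap P s ∈ Cdeg m :=
    V_le_Cdeg (n := m) (fun p j h => by omega) hsV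
  set E := Dy P + s + Tmap P s with hEdef
  set F : R2 := P + s * X 1 + s * P with hFdef
  have hDyF : Dy F = E := by
    rw [hFdef, map_add, map_add, hEdef]
    congr 1
    rw [mul_comm s (X 1), Dy_X1_mul]
  have hccs : constantCoeff s = 0 := by
    rw [← coeff_zero_eq_constantCoeff_apply]
    exact hs1 0 (by simp)
  have hF0 : coeff 0 F = 0 := by
    rw [hFdef, map_add, map_add, hP0, coeff_zero_eq_constantCoeff_apply, coeff_zero_eq_constantCoeff_apply,
      map_mul, map_mul, hccs, zero_mul, zero_mul]
    ring
  set q : Polynomial ℂ :=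
    ∑ i ∈ Finset.range m, Polynomial.monomial i (coeff (Finsupp.single (0 : Fin 2) i) F) with hqdef
  have hqc : ∀ i, i < m → q.coeff i = coeff (Finsupp.single (0 : Fin 2) i) F := by
    intro i him
    rw [hqdef, Polynomial.finset_sum_coeff]
    rw [Finset.sum_eq_single i]
    · rw [Polynomial.coeff_monomial, if_pos rfl]
    · intro j _ hne
      rw [Polynomial.coeff_monomial, if_neg hne]
    · intro h
      exact absurd (Finset.mem_range.mpr him) h
  have hq0 : q.coeff 0 = 0 := by
    rw [hqc 0 (by omega)]
    simpa using hF0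
  have hqdeg : q.degree < (m : WithBot ℕ) := by
    rw [hqdef]
    refine lt_of_le_of_lt (Polynomial.degree_sum_le _ _) ?_
    rw [Finset.sup_lt_iff (by exact_mod_cast WithBot.bot_lt_coe m)]
    intro i hi
    refine lt_of_le_of_lt (Polynomial.degree_monomial_le i _) ?_
    exact_mod_cast Finset.mem_range.mp hi
  refine ⟨C b⁻¹ * (1 + s), q, ?_, hqdeg, hq0, ?_⟩
  · rw [isUnit_iff_constantCoeff, map_mul, map_add, constantCoeff_C, map_one, hccs, add_zero, mul_one]
    exact (IsUnit.inv (Ne.isUnit hbne))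
  · have hGrw : C b⁻¹ * (1 + s) * G = X 1 + F := by
      have h1 : C b⁻¹ * G = X 1 + P := by rw [hPdef]; ring
      calc C b⁻¹ * (1 + s) * G = (1 + s) * (C b⁻¹ * G) := by ring
        _ = (1 + s) * (X 1 + P) := by rw [h1]
        _ = X 1 + F := by rw [hFdef]; ring
    rw [hGrw, show X 1 + Polynomial.aeval (X 0 : R2) q - (X 1 + F)
        = Polynomial.aeval (X 0 : R2) q - F from by ring]
    rw [show (Polynomial.aeval (X 0 : R2) q - F : R2)
        = (Polynomial.aeval (X 0 : R2) q - Ry F) - X 1 * E from by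
      rw [sub_sub, sub_right_inj, ← hDyF]
      exact splitY F]
    apply Ideal.sub_mem
    · intro d hd
      rw [map_sub, coeff_aeval_X0, coeff_Ry]
      by_cases h1 : d 1 = 0
      · rw [if_pos h1, if_pos h1, hqc (d 0) (by omega),
          show Finsupp.single (0 : Fin 2) (d 0) = d from ((single0_eq_iff h1 (d 0)).mpr rfl).symm,
          sub_self]
      · rw [if_neg h1, if_neg h1, sub_self]
    · exact Ideal.mul_mem_left _ _ hE

lemma sup_pow_le (A B : Ideal R2) (n : ℕ) : (A ⊔ B) ^ n ≤ A ⊔ B ^ n := by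
  induction n with
  | zero => simp
  | succ k ih =>
    rw [pow_succ]
    calc (A ⊔ B) ^ k * (A ⊔ B) ≤ (A ⊔ B ^ k) * (A ⊔ B) := Ideal.mul_mono_left ih
      _ ≤ A ⊔ B ^ (k + 1) := by
        rw [Ideal.mul_sup, Ideal.sup_mul, Ideal.sup_mul]
        refine sup_le (sup_le ?_ ?_) (sup_le ?_ ?_)
        · exact le_trans Ideal.mul_le_right le_sup_left
        · exact le_trans Ideal.mul_le_right le_sup_left
        · exact le_trans Ideal.mul_le_left le_sup_left
        · rw [← pow_succ]
          exact le_sup_right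

lemma pow_le_J {q : Polynomial ℂ} (hq0 : q.coeff 0 = 0) (m : ℕ) :
    (Ideal.span {(X 0 : R2), X 1}) ^ m
      ≤ Ideal.span {(X 1 : R2) + Polynomial.aeval (X 0) q, (X 0 : R2) ^ m} := by
  set Q : R2 := Polynomial.aeval (X 0) q with hQ
  have hQmem : Q ∈ Ideal.span {(X 0 : R2)} := by
    rw [Ideal.mem_span_singleton]
    obtain ⟨r, hr⟩ := Polynomial.X_dvd_iff.mpr hq0
    exact ⟨Polynomial.aeval (X 0) r, by rw [hQ, hr, map_mul, Polynomial.aeval_X]⟩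
  set A := Ideal.span {(X 1 : R2) + Q}
  set B := Ideal.span {(X 0 : R2)}
  have h1 : Ideal.span {(X 0 : R2), X 1} ≤ A ⊔ B := by
    rw [Ideal.span_le]
    rintro f (rfl | rfl)
    · exact le_sup_right (a := A) (Ideal.subset_span rfl)
    · have : (X 1 : R2) = (X 1 + Q) - Q := by ring
      rw [this]
      exact Ideal.sub_mem _ (le_sup_left (b := B) (Ideal.subset_span rfl))
        (le_sup_right (a := A) hQmem)
  calc (Ideal.span {(X 0 : R2), X 1}) ^ m ≤ (A ⊔ B) ^ m := Ideal.pow_right_mono h1 m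
    _ ≤ A ⊔ B ^ m := sup_pow_le A B m
    _ ≤ Ideal.span {(X 1 : R2) + Q, (X 0 : R2) ^ m} := by
      refine sup_le ?_ ?_
      · rw [Ideal.span_le]
        rintro f rfl
        exact Ideal.subset_span (by simp)
      · rw [Ideal.span_singleton_pow, Ideal.span_le]
        rintro f rfl
        exact Ideal.subset_span (by simp)

lemma DyPow_succ_apply (k : ℕ) (f : R2) : (Dy ^ (k + 1)) f = Dy ((Dy ^ k) f) := by
  rw [pow_succ', Module.End.mul_apply]

lemma DyPow_mul_xonly {u : R2} (hu : xonly u) : ∀ (k : ℕ) (g : R2),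
    (Dy ^ k) (u * g) = u * (Dy ^ k) g := by
  intro k
  induction k with
  | zero => intro g; simp
  | succ n ih =>
    intro g
    rw [pow_succ, Module.End.mul_apply, Module.End.mul_apply, Dy_mul_xonly g hu, ih (Dy g)]

lemma Dy_of_xonly {f : R2} (hf : xonly f) : Dy f = 0 := by
  ext d
  rw [coeff_Dy, map_zero]
  apply hf
  simp [Finsupp.add_apply]

lemma Ry_of_xonly {f : R2} (hf : xonly f) : Ry f = f := by
  ext d
  rw [coeff_Ry]
  by_cases h1 : d 1 = 0
  · rw [if_pos h1]
  · rw [if_neg h1, hf d h1]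

lemma xonly_sub {f g : R2} (hf : xonly f) (hg : xonly g) : xonly (f - g) := by
  intro d hd
  rw [map_sub, hf d hd, hg d hd, sub_self]

lemma DyPow_X1Q_mul {Q : R2} (hQ : xonly Q) (A : R2) : ∀ k : ℕ,
    (Dy ^ (k + 1)) ((X 1 + Q) * A) = (Dy ^ k) A + Q * (Dy ^ (k + 1)) A := by
  intro k
  induction k with
  | zero =>
    rw [DyPow_succ_apply, pow_zero, Module.End.one_apply, Module.End.one_apply,
      add_mul, map_add, Dy_X1_mul, Dy_mul_xonly A hQ, DyPow_succ_apply, pow_zero,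
      Module.End.one_apply]
  | succ n ih =>
    rw [DyPow_succ_apply (n + 1), ih, map_add, Dy_mul_xonly _ hQ,
      ← DyPow_succ_apply n A, ← DyPow_succ_apply (n + 1) A]

lemma uniq_aux {q : Polynomial ℂ} (hq0 : q.coeff 0 = 0) (m : ℕ) {δ : R2}
    (hδx : xonly δ)
    (hδ : δ ∈ Ideal.span {(X 1 : R2) + Polynomial.aeval (X 0) q, (X 0 : R2) ^ m}) :
    δ ∈ Ideal.span {(X 0 : R2) ^ m} := by
  classical
  set Q : R2 := Polynomial.aeval (X 0) q with hQdef
  have hQx : xonly Q := xonly_aeval q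
  have hQdvd : (X 0 : R2) ∣ Q := by
    obtain ⟨r, hr⟩ := Polynomial.X_dvd_iff.mpr hq0
    exact ⟨Polynomial.aeval (X 0) r, by rw [hQdef, hr, map_mul, Polynomial.aeval_X]⟩
  obtain ⟨A, B, hAB⟩ := Ideal.mem_span_pair.mp hδ
  set Sof : R2 → R2 := fun f => ∑ k ∈ Finset.range (m + 1), (-Q) ^ k * Ry ((Dy ^ k) f)
    with hSdef
  have hSadd : ∀ f g, Sof (f + g) = Sof f + Sof g := by
    intro f g
    simp only [hSdef, map_add, mul_add]
    rw [Finset.sum_add_distrib]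
  have hSδ : Sof δ = δ := by
    have hzero : ∀ k : ℕ, (Dy ^ (k + 1)) δ = 0 := by
      intro k
      rw [pow_succ, Module.End.mul_apply, Dy_of_xonly hδx, map_zero]
    simp only [hSdef]
    rw [Finset.sum_range_succ']
    simp only [hzero, map_zero, mul_zero, Finset.sum_const_zero, zero_add]
    rw [pow_zero, one_mul, pow_zero, Module.End.one_apply, Ry_of_xonly hδx]
  have hS1 : Sof (A * (X 1 + Q)) ∈ Ideal.span {(X 0 : R2) ^ m} := by
    set bfun : ℕ → R2 := fun k => (-Q) ^ k * (Q * Ry ((Dy ^ k) A)) with hbdef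
    have hval : Sof (A * (X 1 + Q)) = bfun m := by
      simp only [hSdef]
      rw [mul_comm A (X 1 + Q)]
      rw [Finset.sum_range_succ']
      have hterms : ∀ k : ℕ, (-Q) ^ (k + 1) * Ry ((Dy ^ (k + 1)) ((X 1 + Q) * A))
          = bfun (k + 1) - bfun k := by
        intro k
        rw [DyPow_X1Q_mul hQx A k, map_add, Ry_mul_xonly _ hQx]
        simp only [hbdef]
        ring
      have h0 : (-Q) ^ 0 * Ry ((Dy ^ 0) ((X 1 + Q) * A)) = bfun 0 := by
        rw [pow_zero, one_mul, pow_zero, Module.End.one_apply, add_mul, map_add,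
          Ry_X1_mul, Ry_mul_xonly _ hQx, zero_add]
        simp only [hbdef]
        rw [pow_zero, one_mul, pow_zero, Module.End.one_apply]
      simp only [hterms, h0]
      rw [Finset.sum_range_sub (f := bfun)]
      abel
    rw [hval, Ideal.mem_span_singleton]
    simp only [hbdef]
    refine Dvd.dvd.mul_right ?_ _
    calc (X 0 : R2) ^ m ∣ Q ^ m := pow_dvd_pow_of_dvd hQdvd m
      _ ∣ (-Q) ^ m := by
        rw [neg_pow]
        exact Dvd.intro_left _ rfl
  have hS2 : Sof (B * (X 0 : R2) ^ m) ∈ Ideal.span {(X 0 : R2) ^ m} := by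
    simp only [hSdef]
    apply Ideal.sum_mem
    intro k _
    rw [mul_comm B ((X 0 : R2) ^ m), DyPow_mul_xonly (xonly_X0_pow m) k,
      Ry_mul_xonly _ (xonly_X0_pow m)]
    rw [Ideal.mem_span_singleton]
    exact Dvd.dvd.mul_left (dvd_mul_right _ _) _
  have hd : δ = A * (X 1 + Q) + B * (X 0 : R2) ^ m := hAB.symm
  rw [← hSδ, hd, hSadd]
  exact Ideal.add_mem _ hS1 hS2
end
end UniqueQ

open MvPowerSeries in
/-- If `G = ax + by + (higher order terms)` in `ℂ[[x,y]]` with `ab ≠ 0` and `m > 1`, then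
there is a unique polynomial `q(x)` of degree `< m` with `q(0) = 0` such that
`(G, (x,y)^m) = (y + q(x), x^m)`. -/
theorem unique_q_ideal_eq (G : MvPowerSeries (Fin 2) ℂ) (a b : ℂ)
    (h0 : constantCoeff G = 0)
    (ha : coeff (Finsupp.single (0 : Fin 2) 1) G = a)
    (hb : coeff (Finsupp.single (1 : Fin 2) 1) G = b)
    (hab : a * b ≠ 0) (m : ℕ) (hm : 1 < m) :
    ∃! q : Polynomial ℂ, q.degree < m ∧ q.coeff 0 = 0 ∧
      Ideal.span {G} ⊔ Ideal.span {(X 0 : MvPowerSeries (Fin 2) ℂ), X 1} ^ m =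
        Ideal.span {(X 1 : MvPowerSeries (Fin 2) ℂ) + Polynomial.aeval (X 0) q,
          (X 0 : MvPowerSeries (Fin 2) ℂ) ^ m} := by
  classical
  have hbne : b ≠ 0 := fun h => hab (by rw [h, mul_zero])
  obtain ⟨u, q, hu, hqdeg, hq0, hrel⟩ := UniqueQ.exists_rel G b h0 hb hbne m hm
  set Q : MvPowerSeries (Fin 2) ℂ := Polynomial.aeval (X 0) q with hQdef
  set M : Ideal (MvPowerSeries (Fin 2) ℂ) := Ideal.span {(X 0 : MvPowerSeries (Fin 2) ℂ), X 1}
    with hMdef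
  set J : Ideal (MvPowerSeries (Fin 2) ℂ) :=
    Ideal.span {(X 1 : MvPowerSeries (Fin 2) ℂ) + Q, (X 0 : MvPowerSeries (Fin 2) ℂ) ^ m}
    with hJdef
  have hwM : X 1 + Q - u * G ∈ M ^ m := UniqueQ.Cdeg_le_pow m hrel
  have hMJ : M ^ m ≤ J := UniqueQ.pow_le_J hq0 m
  have hEq : Ideal.span {G} ⊔ M ^ m = J := by
    apply le_antisymm
    · refine sup_le ?_ hMJ
      rw [Ideal.span_le]
      rintro f rfl
      obtain ⟨U, hU⟩ := hu
      have hG : f = (↑U⁻¹ : MvPowerSeries (Fin 2) ℂ) * ((X 1 + Q) - (X 1 + Q - u * f)) := by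
        rw [sub_sub_cancel, ← hU]
        exact (Units.inv_mul_cancel_left U f).symm
      rw [hG]
      refine Ideal.mul_mem_left _ _ (Ideal.sub_mem _ ?_ (hMJ hwM))
      exact Ideal.subset_span (by simp)
    · rw [Ideal.span_le]
      rintro f (rfl | rfl)
      · have hf : (X 1 : MvPowerSeries (Fin 2) ℂ) + Q = u * G + (X 1 + Q - u * G) := by ring
        rw [hf]
        refine Ideal.add_mem _ ?_ (Ideal.mem_sup_right hwM)
        exact Ideal.mem_sup_left (Ideal.mul_mem_left _ _ (Ideal.subset_span rfl))
      · exact Ideal.mem_sup_right (Ideal.pow_mem_pow (Ideal.subset_span (by simp)) m)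
  refine ⟨q, ⟨hqdeg, hq0, hEq⟩, ?_⟩
  rintro q' ⟨hq'deg, hq'0, hq'J⟩
  have hJJ : Ideal.span {(X 1 : MvPowerSeries (Fin 2) ℂ) + Polynomial.aeval (X 0) q',
      (X 0 : MvPowerSeries (Fin 2) ℂ) ^ m} = J := by
    rw [← hq'J, hEq]
  set δ : MvPowerSeries (Fin 2) ℂ := Polynomial.aeval (X 0) q' - Q with hδdef
  have hδmem : δ ∈ J := by
    have h1 : (X 1 : MvPowerSeries (Fin 2) ℂ) + Polynomial.aeval (X 0) q' ∈ J := by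
      rw [← hJJ]
      exact Ideal.subset_span (by simp)
    have h2 : (X 1 : MvPowerSeries (Fin 2) ℂ) + Q ∈ J := Ideal.subset_span (by simp)
    have hf : δ = ((X 1 : MvPowerSeries (Fin 2) ℂ) + Polynomial.aeval (X 0) q') - (X 1 + Q) := by
      rw [hδdef]; ring
    rw [hf]
    exact Ideal.sub_mem _ h1 h2
  have hδx : UniqueQ.xonly δ := UniqueQ.xonly_sub (UniqueQ.xonly_aeval q') (UniqueQ.xonly_aeval q)
  have hδspan : δ ∈ Ideal.span {(X 0 : MvPowerSeries (Fin 2) ℂ) ^ m} :=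
    UniqueQ.uniq_aux hq0 m hδx hδmem
  rw [Ideal.mem_span_singleton] at hδspan
  have hcoeff := MvPowerSeries.X_pow_dvd_iff.mp hδspan
  apply Polynomial.ext
  intro i
  by_cases him : i < m
  · have hc := hcoeff (Finsupp.single (0 : Fin 2) i)
      (by rw [Finsupp.single_eq_same]; exact him)
    rw [hδdef, map_sub, UniqueQ.coeff_aeval_X0, UniqueQ.coeff_aeval_X0] at hc
    rw [if_pos (Finsupp.single_eq_of_ne (by decide : (1 : Fin 2) ≠ 0)),
      if_pos (Finsupp.single_eq_of_ne (by decide : (1 : Fin 2) ≠ 0)),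
      Finsupp.single_eq_same, sub_eq_zero] at hc
    exact hc
  · push_neg at him
    have h1 : q'.coeff i = 0 := Polynomial.coeff_eq_zero_of_degree_lt
      (lt_of_lt_of_le hq'deg (by exact_mod_cast him))
    have h2 : q.coeff i = 0 := Polynomial.coeff_eq_zero_of_degree_lt
      (lt_of_lt_of_le hqdeg (by exact_mod_cast him))
    rw [h1, h2]
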